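/- Assume h^x_m = 0 for all sites m (γ, J, μ, h^y, h^z arbitrary) and let H = H_γ + H_J + H_μ + H_h. Then for every 0 ≤ Q ≤ M and every λ ∈ ℂ: λ is an eigenvalue of H restricted to the charge sector W_Q if and only if (∑_{m=1}^{M} μ_m) − λ is an eigenvalue of H restricted to W_{M−Q}. In particular, if μ ≡ 0 then the spectrum of H restricted to W_{M−Q} equals the negative of the spectrum of H restricted to W_Q, and the spectrum of H on all of V_M is symmetric about 0. -/

import Mathlib

open scoped BigOperators

namespace QuantumBreakdown

/-- Basis index: pairs of an occupation configuration and a spin configuration. -/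
abbrev Cfg (M : ℕ) := (Fin M → Bool) × (Fin M → Bool)

/-- The Hilbert space `V_M`. -/
abbrev V (M : ℕ) := Cfg M → ℂ

/-- The basis vector `e_{n,s}`. -/
noncomputable def e (M : ℕ) (p : Cfg M) : V M := Pi.single p 1

/-- The linear operator determined by prescribed images of the basis vectors. -/
noncomputable def mkOp (M : ℕ) (f : Cfg M → V M) : V M →ₗ[ℂ] V M :=
  (Pi.basisFun ℂ (Cfg M)).constr ℂ f

/-- The left site of edge `m`. -/
def sL (M : ℕ) (m : Fin (M - 1)) : Fin M := ⟨m.1, by have := m.2; omega⟩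

/-- The right site of edge `m`. -/
def sR (M : ℕ) (m : Fin (M - 1)) : Fin M := ⟨m.1 + 1, by have := m.2; omega⟩

/-- Move a fermion from site `a` to site `b`. -/
def hop (M : ℕ) (n : Fin M → Bool) (a b : Fin M) : Fin M → Bool :=
  Function.update (Function.update n a false) b true

/-- The hopping term `H_γ`. -/
noncomputable def Hgam (M : ℕ) (γ : Fin (M - 1) → ℝ) : V M →ₗ[ℂ] V M :=
  mkOp M fun p =>
    -∑ m : Fin (M - 1), (γ m : ℂ) •
      ((if p.1 (sL M m) = true ∧ p.1 (sR M m) = false then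
          e M (hop M p.1 (sL M m) (sR M m), p.2) else 0)
        +
       (if p.1 (sR M m) = true ∧ p.1 (sL M m) = false then
          e M (hop M p.1 (sR M m) (sL M m), p.2) else 0))

/-- The breakdown interaction `H_J`. -/
noncomputable def HJop (M : ℕ) (J : Fin (M - 1) → ℝ) : V M →ₗ[ℂ] V M :=
  mkOp M fun p =>
    ∑ m : Fin (M - 1), (J m : ℂ) •
      ((if p.1 (sL M m) = true ∧ p.1 (sR M m) = false ∧ p.2 (sR M m) = false then
          e M (hop M p.1 (sL M m) (sR M m), Function.update p.2 (sR M m) true) else 0)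
        +
       (if p.1 (sR M m) = true ∧ p.1 (sL M m) = false ∧ p.2 (sR M m) = true then
          e M (hop M p.1 (sR M m) (sL M m), Function.update p.2 (sR M m) false) else 0))

/-- The on-site potential `H_μ`. -/
noncomputable def Hmu (M : ℕ) (μ : Fin M → ℝ) : V M →ₗ[ℂ] V M :=
  mkOp M fun p => (∑ m : Fin M, if p.1 m = true then (μ m : ℂ) else 0) • e M p

/-- Pauli `σ^x` at site `m`. -/
noncomputable def sigx (M : ℕ) (m : Fin M) : V M →ₗ[ℂ] V M :=
  mkOp M fun p => e M (p.1, Function.update p.2 m (!p.2 m))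

/-- Pauli `σ^y` at site `m`. -/
noncomputable def sigy (M : ℕ) (m : Fin M) : V M →ₗ[ℂ] V M :=
  mkOp M fun p =>
    (if p.2 m = true then Complex.I else -Complex.I) • e M (p.1, Function.update p.2 m (!p.2 m))

/-- Pauli `σ^z` at site `m`. -/
noncomputable def sigz (M : ℕ) (m : Fin M) : V M →ₗ[ℂ] V M :=
  mkOp M fun p => (if p.2 m = true then (1 : ℂ) else -1) • e M p

/-- The magnetic field term `H_h`. -/
noncomputable def Hh (M : ℕ) (hx hy hz : Fin M → ℝ) : V M →ₗ[ℂ] V M :=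
  ∑ m : Fin M, ((hx m : ℂ) • sigx M m + (hy m : ℂ) • sigy M m + (hz m : ℂ) • sigz M m)

/-- Number of occupied sites of an occupation configuration. -/
def nOcc (M : ℕ) (n : Fin M → Bool) : ℕ := (Finset.univ.filter fun m => n m = true).card

/-- The number operator `N`. -/
noncomputable def numOp (M : ℕ) : V M →ₗ[ℂ] V M :=
  mkOp M fun p => (nOcc M p.1 : ℂ) • e M p

/-- The charge-`Q` sector `W_Q`. -/
noncomputable def sector (M Q : ℕ) : Submodule ℂ (V M) :=
  Submodule.span ℂ { v | ∃ p : Cfg M, nOcc M p.1 = Q ∧ v = e M p }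

/-- The charge-`Q` sector with first spin up, `W_Q^↑`. -/
noncomputable def sectorUp (M : ℕ) (hM : 0 < M) (Q : ℕ) : Submodule ℂ (V M) :=
  Submodule.span ℂ { v | ∃ p : Cfg M, nOcc M p.1 = Q ∧ p.2 ⟨0, hM⟩ = true ∧ v = e M p }

end QuantumBreakdown

open QuantumBreakdown
namespace QuantumBreakdown

lemma mkOp_e (M : ℕ) (f : Cfg M → V M) (p : Cfg M) : mkOp M f (e M p) = f p := by
  have : e M p = Pi.basisFun ℂ (Cfg M) p := by rw [Pi.basisFun_apply]; rfl
  rw [mkOp, this, Module.Basis.constr_basis]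

lemma op_ext (M : ℕ) {A B : V M →ₗ[ℂ] V M} (h : ∀ p, A (e M p) = B (e M p)) : A = B := by
  apply Module.Basis.ext (Pi.basisFun ℂ (Cfg M))
  intro p
  have : (Pi.basisFun ℂ (Cfg M)) p = e M p := by rw [Pi.basisFun_apply]; rfl
  rw [this]; exact h p

/-- sign of an occupation configuration -/
noncomputable def sgn (M : ℕ) (n : Fin M → Bool) : ℂ :=
  ∏ m : Fin M, if n m then (-1 : ℂ) ^ (m : ℕ) else 1

lemma sgn_ne_zero (M : ℕ) (n : Fin M → Bool) : sgn M n ≠ 0 := by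
  rw [sgn]
  apply Finset.prod_ne_zero_iff.2
  intro m _
  split <;> simp [pow_ne_zero]

end QuantumBreakdown
namespace QuantumBreakdown

lemma gfun_update (M : ℕ) (n : Fin M → Bool) (a : Fin M) (v : Bool) :
    (fun m => if Function.update n a v m then (-1 : ℂ) ^ (m : ℕ) else 1)
      = Function.update (fun m => if n m then (-1 : ℂ) ^ (m : ℕ) else 1) a
          (if v then (-1 : ℂ) ^ (a : ℕ) else 1) := by
  funext m
  by_cases h : m = a
  · subst h; simp
  · simp [Function.update_apply, h]

lemma sgn_hop (M : ℕ) (n : Fin M → Bool) (a b : Fin M) (hab : a ≠ b)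
    (ha : n a = true) (hb : n b = false) :
    sgn M (hop M n a b) * (-1 : ℂ) ^ (a : ℕ) = sgn M n * (-1 : ℂ) ^ (b : ℕ) := by
  have hmem : a ∈ (Finset.univ.erase b : Finset (Fin M)) := by
    simp [Finset.mem_erase, hab]
  have h1 : sgn M (hop M n a b)
      = (-1 : ℂ) ^ (b : ℕ) * ∏ m ∈ (Finset.univ.erase b).erase a,
          (if n m then (-1 : ℂ) ^ (m : ℕ) else 1) := by
    rw [sgn, hop, gfun_update, Finset.prod_update_of_mem (Finset.mem_univ b),
        ← Finset.erase_eq, gfun_update, Finset.prod_update_of_mem hmem, ← Finset.erase_eq]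
    simp
  have h2 : sgn M n
      = (-1 : ℂ) ^ (a : ℕ) * ∏ m ∈ (Finset.univ.erase b).erase a,
          (if n m then (-1 : ℂ) ^ (m : ℕ) else 1) := by
    rw [sgn, ← Finset.mul_prod_erase _ _ (Finset.mem_univ b), hb,
        ← Finset.mul_prod_erase _ _ hmem, ha]
    simp
  rw [h1, h2]; ring

lemma sL_ne_sR (M : ℕ) (m : Fin (M - 1)) : sL M m ≠ sR M m := by
  simp [sL, sR, Fin.ext_iff]

lemma sgn_hop_LR (M : ℕ) (n : Fin M → Bool) (m : Fin (M - 1))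
    (ha : n (sL M m) = true) (hb : n (sR M m) = false) :
    sgn M (hop M n (sL M m) (sR M m)) = -sgn M n := by
  have := sgn_hop M n (sL M m) (sR M m) (sL_ne_sR M m) ha hb
  have hpow : ((-1 : ℂ) ^ ((sL M m : Fin M) : ℕ)) ≠ 0 := by
    simp [pow_ne_zero]
  have hsr : ((sR M m : Fin M) : ℕ) = ((sL M m : Fin M) : ℕ) + 1 := rfl
  rw [hsr, pow_succ] at this
  refine mul_right_cancel₀ hpow ?_
  linear_combination this

lemma sgn_hop_RL (M : ℕ) (n : Fin M → Bool) (m : Fin (M - 1))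
    (ha : n (sR M m) = true) (hb : n (sL M m) = false) :
    sgn M (hop M n (sR M m) (sL M m)) = -sgn M n := by
  have := sgn_hop M n (sR M m) (sL M m) (sL_ne_sR M m).symm ha hb
  have hsr : ((sR M m : Fin M) : ℕ) = ((sL M m : Fin M) : ℕ) + 1 := rfl
  rw [hsr, pow_succ] at this
  have hpow : ((-1 : ℂ) ^ ((sL M m : Fin M) : ℕ)) ≠ 0 := by
    simp [pow_ne_zero]
  refine mul_right_cancel₀ hpow ?_
  linear_combination -this

lemma hop_not (M : ℕ) (n : Fin M → Bool) (a b : Fin M) (hab : a ≠ b) :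
    (fun m => ! hop M n a b m) = hop M (fun m => ! n m) b a := by
  funext m
  by_cases h1 : m = b
  · subst h1; simp [hop, Function.update_apply, hab.symm]
  · by_cases h2 : m = a
    · subst h2; simp [hop, Function.update_apply, h1]
    · simp [hop, Function.update_apply, h1, h2]

lemma not_update (M : ℕ) (s : Fin M → Bool) (a : Fin M) (v : Bool) :
    (fun m => ! Function.update s a v m) = Function.update (fun m => ! s m) a (!v) := by
  funext m
  by_cases h : m = a
  · subst h; simp
  · simp [Function.update_apply, h]

end QuantumBreakdown
namespace QuantumBreakdown

/-- Flip of a configuration. -/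
def flip (M : ℕ) (p : Cfg M) : Cfg M := (fun m => !p.1 m, fun m => !p.2 m)

/-- The particle-hole conjugation operator. -/
noncomputable def Cop (M : ℕ) : V M →ₗ[ℂ] V M :=
  mkOp M fun p => sgn M p.1 • e M (flip M p)

lemma Cop_e (M : ℕ) (p : Cfg M) : Cop M (e M p) = sgn M p.1 • e M (flip M p) :=
  mkOp_e M _ p

lemma Cop_Hgam (M : ℕ) (γ : Fin (M - 1) → ℝ) (p : Cfg M) :
    Cop M (Hgam M γ (e M p)) + Hgam M γ (Cop M (e M p)) = 0 := by
  rw [Cop_e, Hgam, mkOp_e, map_smul, mkOp_e]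
  simp only [map_neg, map_sum, map_smul, map_add, apply_ite (Cop M), map_zero, Cop_e, flip]
  rw [smul_neg, ← neg_add, neg_eq_zero, Finset.smul_sum, ← Finset.sum_add_distrib]
  apply Finset.sum_eq_zero
  intro m _
  rcases Bool.eq_false_or_eq_true (p.1 (sL M m)) with hL | hL <;>
    rcases Bool.eq_false_or_eq_true (p.1 (sR M m)) with hR | hR <;>
    simp only [hL, hR, if_pos, if_neg, and_true, and_false, true_and, false_and,
      Bool.not_true, Bool.not_false, if_true, if_false, reduceIte, and_self,
      Bool.false_eq_true, Bool.true_eq_false, add_zero, zero_add, smul_zero, and_true]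
  case inr.inl =>
    rw [sgn_hop_RL M p.1 m hR hL,
        hop_not M p.1 (sR M m) (sL M m) (sL_ne_sR M m).symm]
    module
  case inl.inr =>
    rw [sgn_hop_LR M p.1 m hL hR,
        hop_not M p.1 (sL M m) (sR M m) (sL_ne_sR M m)]
    module

lemma Cop_HJ (M : ℕ) (J : Fin (M - 1) → ℝ) (p : Cfg M) :
    Cop M (HJop M J (e M p)) + HJop M J (Cop M (e M p)) = 0 := by
  rw [Cop_e, HJop, mkOp_e, map_smul, mkOp_e]
  simp only [map_sum, map_smul, map_add, apply_ite (Cop M), map_zero, Cop_e, flip]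
  rw [Finset.smul_sum, ← Finset.sum_add_distrib]
  apply Finset.sum_eq_zero
  intro m _
  rcases Bool.eq_false_or_eq_true (p.1 (sL M m)) with hL | hL <;>
    rcases Bool.eq_false_or_eq_true (p.1 (sR M m)) with hR | hR <;>
    rcases Bool.eq_false_or_eq_true (p.2 (sR M m)) with hs | hs <;>
    simp only [hL, hR, hs, if_pos, if_neg, and_true, and_false, true_and, false_and,
      Bool.not_true, Bool.not_false, if_true, if_false, reduceIte, and_self,
      Bool.false_eq_true, Bool.true_eq_false, add_zero, zero_add, smul_zero, and_true]
  case inr.inl.inl =>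
    rw [sgn_hop_RL M p.1 m hR hL,
        hop_not M p.1 (sR M m) (sL M m) (sL_ne_sR M m).symm,
        not_update M p.2 (sR M m) false]
    simp only [Bool.not_false]
    module
  case inl.inr.inr =>
    rw [sgn_hop_LR M p.1 m hL hR,
        hop_not M p.1 (sL M m) (sR M m) (sL_ne_sR M m),
        not_update M p.2 (sR M m) true]
    simp only [Bool.not_true]
    module

lemma Cop_Hmu (M : ℕ) (μ : Fin M → ℝ) (p : Cfg M) :
    Cop M (Hmu M μ (e M p)) + Hmu M μ (Cop M (e M p))
      = ((∑ m : Fin M, μ m : ℝ) : ℂ) • Cop M (e M p) := by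
  rw [Cop_e, Hmu, mkOp_e, map_smul, map_smul, mkOp_e, Cop_e]
  simp only [flip]
  have key : (∑ m : Fin M, if p.1 m = true then (μ m : ℂ) else 0)
      + (∑ m : Fin M, if (!p.1 m) = true then (μ m : ℂ) else 0)
      = ((∑ m : Fin M, μ m : ℝ) : ℂ) := by
    push_cast
    rw [← Finset.sum_add_distrib]
    apply Finset.sum_congr rfl
    intro m _
    cases h : p.1 m <;> simp [h]
  rw [smul_comm (sgn M p.1)]
  rw [smul_smul, smul_smul, smul_smul, ← add_smul]
  congr 1
  rw [← key]; ring_nf; rfl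

lemma Cop_sigy (M : ℕ) (m : Fin M) (p : Cfg M) :
    Cop M (sigy M m (e M p)) + sigy M m (Cop M (e M p)) = 0 := by
  cases hs : p.2 m <;>
  · rw [Cop_e, sigy, mkOp_e, map_smul, map_smul, mkOp_e, Cop_e]
    simp only [flip, not_update M p.2 m, hs, Bool.not_true, Bool.not_false, Bool.not_not,
      reduceIte, Bool.false_eq_true, Bool.true_eq_false, if_true, if_false]
    module

lemma Cop_sigz (M : ℕ) (m : Fin M) (p : Cfg M) :
    Cop M (sigz M m (e M p)) + sigz M m (Cop M (e M p)) = 0 := by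
  cases hs : p.2 m <;>
  · rw [Cop_e, sigz, mkOp_e, map_smul, map_smul, mkOp_e, Cop_e]
    simp only [flip, hs, Bool.not_true, Bool.not_false, reduceIte,
      Bool.false_eq_true, Bool.true_eq_false, if_true, if_false]
    module

lemma Cop_Hh (M : ℕ) (hx hy hz : Fin M → ℝ) (hhx : ∀ m, hx m = 0) (p : Cfg M) :
    Cop M (Hh M hx hy hz (e M p)) + Hh M hx hy hz (Cop M (e M p)) = 0 := by
  rw [Hh]
  simp only [LinearMap.sum_apply, LinearMap.add_apply, LinearMap.smul_apply, map_sum,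
    map_add, map_smul, hhx, Complex.ofReal_zero, zero_smul, zero_add, smul_zero]
  rw [← Finset.sum_add_distrib]
  apply Finset.sum_eq_zero
  intro m _
  have hy' := Cop_sigy M m p
  have hz' := Cop_sigz M m p
  rw [add_add_add_comm, ← smul_add, ← smul_add, hy', hz', smul_zero, smul_zero, add_zero]

end QuantumBreakdown
namespace QuantumBreakdown

lemma flip_flip (M : ℕ) (p : Cfg M) : flip M (flip M p) = p := by
  simp [flip]

lemma sgn_mul_sgn_flip (M : ℕ) (n : Fin M → Bool) :
    sgn M n * sgn M (fun m => !n m) = ∏ m : Fin M, (-1 : ℂ) ^ (m : ℕ) := by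
  rw [sgn, sgn, ← Finset.prod_mul_distrib]
  apply Finset.prod_congr rfl
  intro m _
  cases h : n m <;> simp [h]

lemma Cop_Cop (M : ℕ) (v : V M) :
    Cop M (Cop M v) = (∏ m : Fin M, (-1 : ℂ) ^ (m : ℕ)) • v := by
  have : Cop M ∘ₗ Cop M = (∏ m : Fin M, (-1 : ℂ) ^ (m : ℕ)) • LinearMap.id := by
    apply op_ext
    intro p
    simp only [LinearMap.comp_apply, LinearMap.smul_apply, LinearMap.id_apply,
      Cop_e, map_smul, flip_flip]
    rw [smul_smul]
    simp only [flip]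
    rw [sgn_mul_sgn_flip]
  have := congrArg (fun f => f v) this
  simpa using this

lemma Cop_inj (M : ℕ) {v : V M} (h : Cop M v = 0) : v = 0 := by
  have h2 := Cop_Cop M v
  rw [h, map_zero] at h2
  have hc : (∏ m : Fin M, (-1 : ℂ) ^ (m : ℕ)) ≠ 0 := by
    apply Finset.prod_ne_zero_iff.2
    intro m _; exact pow_ne_zero _ (by norm_num)
  exact (smul_eq_zero.mp h2.symm).resolve_left hc

lemma nOcc_flip (M : ℕ) (n : Fin M → Bool) :
    nOcc M (fun m => !n m) = M - nOcc M n := by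
  rw [nOcc, nOcc]
  have : (Finset.univ.filter fun m => (!n m) = true)
      = Finset.univ \ (Finset.univ.filter fun m => n m = true) := by
    ext m
    simp [Bool.not_eq_true']
  rw [this, Finset.card_sdiff_of_subset (Finset.filter_subset _ _)]
  simp

lemma Cop_sector (M Q : ℕ) {v : V M} (hv : v ∈ sector M Q) :
    Cop M v ∈ sector M (M - Q) := by
  have hle : sector M Q ≤ Submodule.comap (Cop M) (sector M (M - Q)) := by
    rw [sector, Submodule.span_le]
    rintro w ⟨p, hp, rfl⟩
    simp only [SetLike.mem_coe, Submodule.mem_comap, Cop_e]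
    apply Submodule.smul_mem
    apply Submodule.subset_span
    exact ⟨flip M p, by rw [← hp]; exact nOcc_flip M p.1, rfl⟩
  exact hle hv

lemma key_id (M : ℕ) (γ J : Fin (M - 1) → ℝ) (μ : Fin M → ℝ) (hx hy hz : Fin M → ℝ)
    (hhx : ∀ m, hx m = 0) (v : V M) :
    Cop M ((Hgam M γ + HJop M J + Hmu M μ + Hh M hx hy hz) v)
      + (Hgam M γ + HJop M J + Hmu M μ + Hh M hx hy hz) (Cop M v)
      = ((∑ m : Fin M, μ m : ℝ) : ℂ) • Cop M v := by
  set H := Hgam M γ + HJop M J + Hmu M μ + Hh M hx hy hz with hH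
  have : Cop M ∘ₗ H + H ∘ₗ Cop M = ((∑ m : Fin M, μ m : ℝ) : ℂ) • Cop M := by
    apply op_ext
    intro p
    simp only [LinearMap.add_apply, LinearMap.comp_apply, LinearMap.smul_apply, hH,
      map_add]
    have h1 := Cop_Hgam M γ p
    have h2 := Cop_HJ M J p
    have h3 := Cop_Hmu M μ p
    have h4 := Cop_Hh M hx hy hz hhx p
    linear_combination (norm := abel) h1 + h2 + h3 + h4
  have := congrArg (fun f => f v) this
  simpa using this

lemma eigen_push (M : ℕ) (γ J : Fin (M - 1) → ℝ) (μ : Fin M → ℝ) (hx hy hz : Fin M → ℝ)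
    (hhx : ∀ m, hx m = 0) (v : V M) (lam : ℂ)
    (hev : (Hgam M γ + HJop M J + Hmu M μ + Hh M hx hy hz) v = lam • v) :
    (Hgam M γ + HJop M J + Hmu M μ + Hh M hx hy hz) (Cop M v)
      = (((∑ m : Fin M, μ m : ℝ) : ℂ) - lam) • Cop M v := by
  have h := key_id M γ J μ hx hy hz hhx v
  rw [hev, map_smul] at h
  rw [sub_smul]
  linear_combination (norm := module) h

end QuantumBreakdown
theorem charge_conjugation_spectrum (M : ℕ) (hM : 2 ≤ M)
    (γ J : Fin (M - 1) → ℝ) (μ : Fin M → ℝ) (hx hy hz : Fin M → ℝ)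
    (hhx : ∀ m, hx m = 0) :
    let H : V M →ₗ[ℂ] V M := Hgam M γ + HJop M J + Hmu M μ + Hh M hx hy hz
    (∀ Q ≤ M, ∀ lam : ℂ,
        (∃ v ∈ sector M Q, v ≠ 0 ∧ H v = lam • v) ↔
        (∃ w ∈ sector M (M - Q), w ≠ 0 ∧ H w = (((∑ m : Fin M, μ m : ℝ) : ℂ) - lam) • w))
    ∧ ((∀ m, μ m = 0) → ∀ lam : ℂ,
        (∃ v : V M, v ≠ 0 ∧ H v = lam • v) ↔ (∃ w : V M, w ≠ 0 ∧ H w = (-lam) • w)) := by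
  intro H
  constructor
  · intro Q hQ lam
    constructor
    · rintro ⟨v, hvmem, hv0, hev⟩
      exact ⟨Cop M v, Cop_sector M Q hvmem, fun h => hv0 (Cop_inj M h),
        eigen_push M γ J μ hx hy hz hhx v lam hev⟩
    · rintro ⟨w, hwmem, hw0, hew⟩
      refine ⟨Cop M w, ?_, fun h => hw0 (Cop_inj M h), ?_⟩
      · have := Cop_sector M (M - Q) hwmem
        rwa [Nat.sub_sub_self hQ] at this
      · have := eigen_push M γ J μ hx hy hz hhx w _ hew
        rwa [sub_sub_cancel] at this
  · intro hμ lam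
    constructor
    · rintro ⟨v, hv0, hev⟩
      refine ⟨Cop M v, fun h => hv0 (Cop_inj M h), ?_⟩
      have := eigen_push M γ J μ hx hy hz hhx v lam hev
      simpa [hμ, H] using this
    · rintro ⟨w, hw0, hew⟩
      refine ⟨Cop M w, fun h => hw0 (Cop_inj M h), ?_⟩
      have := eigen_push M γ J μ hx hy hz hhx w (-lam) hew
      simpa [hμ, H] using this
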